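/- Let f : ℝ² → ℝ² be a C² vector field compactly supported in 𝔻. Then T₀f(x) = 0 for all x ∈ ℝ² if and only if there exists a C² scalar function φ : ℝ² → ℝ compactly supported in 𝔻 such that f(x) = φ(x)·u(x) for all x. -/

import Mathlib

open MeasureTheory

noncomputable section

/-- Euclidean dot product on `ℝ × ℝ`. -/
def dot (a b : ℝ × ℝ) : ℝ := a.1 * b.1 + a.2 * b.2

/-- Rotation by `π/2`: `w⊥ = (−w₂, w₁)`. -/
def perp (w : ℝ × ℝ) : ℝ × ℝ := (-w.2, w.1)

/-- The open unit disc in `ℝ²`. -/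
def disc : Set (ℝ × ℝ) := {p : ℝ × ℝ | p.1 ^ 2 + p.2 ^ 2 < 1}

/-- Transverse divergent beam transform `T₀f(x) = −∫₀^∞ u⊥(x)·f(x + t u(x)) dt`. -/
def T0 (u : ℝ × ℝ → ℝ × ℝ) (f : ℝ × ℝ → ℝ × ℝ) (x : ℝ × ℝ) : ℝ :=
  - ∫ t in Set.Ioi (0 : ℝ), dot (perp (u x)) (f (x + t • u x))

-- smoothness lemma
lemma phi_contDiff (u : ℝ × ℝ → ℝ × ℝ) (hu : ContDiff ℝ 1 u)
    (hunit : ∀ x, dot (u x) (u x) = 1)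
    (f : ℝ × ℝ → ℝ × ℝ) (hf : ContDiff ℝ 2 f)
    (hpar : ∀ x, f x = dot (u x) (f x) • u x) :
    ContDiff ℝ 2 (fun x => dot (u x) (f x)) := by
  have hu1 : ContDiff ℝ 1 (fun x => (u x).1) := hu.fst
  have hu2 : ContDiff ℝ 1 (fun x => (u x).2) := hu.snd
  have hf1 : ContDiff ℝ 2 (fun x => (f x).1) := hf.fst
  have hf2 : ContDiff ℝ 2 (fun x => (f x).2) := hf.snd
  have hdu1 : ∀ x, HasFDerivAt (fun x => (u x).1) (fderiv ℝ (fun x => (u x).1) x) x :=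
    fun x => (hu1.differentiable one_ne_zero x).hasFDerivAt
  have hdu2 : ∀ x, HasFDerivAt (fun x => (u x).2) (fderiv ℝ (fun x => (u x).2) x) x :=
    fun x => (hu2.differentiable one_ne_zero x).hasFDerivAt
  have hdf1 : ∀ x, HasFDerivAt (fun x => (f x).1) (fderiv ℝ (fun x => (f x).1) x) x :=
    fun x => (hf1.differentiable (by norm_num) x).hasFDerivAt
  have hdf2 : ∀ x, HasFDerivAt (fun x => (f x).2) (fderiv ℝ (fun x => (f x).2) x) x :=
    fun x => (hf2.differentiable (by norm_num) x).hasFDerivAt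
  -- key: u1 • Du1 + u2 • Du2 = 0
  have key : ∀ x, (u x).1 • fderiv ℝ (fun x => (u x).1) x
      + (u x).2 • fderiv ℝ (fun x => (u x).2) x = 0 := by
    intro x
    have h1 : HasFDerivAt (fun y => (u y).1 * (u y).1 + (u y).2 * (u y).2)
        (((u x).1 • fderiv ℝ (fun x => (u x).1) x + (u x).1 • fderiv ℝ (fun x => (u x).1) x)
          + ((u x).2 • fderiv ℝ (fun x => (u x).2) x + (u x).2 • fderiv ℝ (fun x => (u x).2) x)) x :=
      ((hdu1 x).mul (hdu1 x)).add ((hdu2 x).mul (hdu2 x))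
    have h2 : (fun y => (u y).1 * (u y).1 + (u y).2 * (u y).2) = fun _ => (1:ℝ) := by
      funext y; have := hunit y; simpa [dot] using this
    rw [h2] at h1
    have h3 := (hasFDerivAt_const (1:ℝ) x).unique h1
    have h4 : (2:ℝ) • ((u x).1 • fderiv ℝ (fun x => (u x).1) x
        + (u x).2 • fderiv ℝ (fun x => (u x).2) x) = 0 := by
      rw [show (2:ℝ) • ((u x).1 • fderiv ℝ (fun x => (u x).1) x
        + (u x).2 • fderiv ℝ (fun x => (u x).2) x)
        = (u x).1 • fderiv ℝ (fun x => (u x).1) x + (u x).1 • fderiv ℝ (fun x => (u x).1) x +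
          ((u x).2 • fderiv ℝ (fun x => (u x).2) x + (u x).2 • fderiv ℝ (fun x => (u x).2) x)
        from by module, ← h3]
    rcases smul_eq_zero.mp h4 with h | h
    · norm_num at h
    · exact h
  -- derivative of φ
  have hkey2 : ∀ x, ((f x).1 • fderiv ℝ (fun x => (u x).1) x
      + (f x).2 • fderiv ℝ (fun x => (u x).2) x) = 0 := by
    intro x
    have h1 : (f x).1 = dot (u x) (f x) * (u x).1 := by
      conv_lhs => rw [hpar x]
      simp [Prod.smul_fst, smul_eq_mul]
    have h2 : (f x).2 = dot (u x) (f x) * (u x).2 := by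
      conv_lhs => rw [hpar x]
      simp [Prod.smul_snd, smul_eq_mul]
    rw [h1, h2, mul_smul, mul_smul, ← smul_add, key x, smul_zero]
  have hasfd : ∀ x, HasFDerivAt (fun y => dot (u y) (f y))
      ((u x).1 • fderiv ℝ (fun x => (f x).1) x + (u x).2 • fderiv ℝ (fun x => (f x).2) x) x := by
    intro x
    have h : HasFDerivAt (fun y => (u y).1 * (f y).1 + (u y).2 * (f y).2) _ x :=
      ((hdu1 x).mul (hdf1 x)).add ((hdu2 x).mul (hdf2 x))
    have he : (fun y => (u y).1 * (f y).1 + (u y).2 * (f y).2) = fun y => dot (u y) (f y) := by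
      funext y; simp [dot]
    rw [he] at h
    have harr : (u x).1 • fderiv ℝ (fun x => (f x).1) x + (f x).1 • fderiv ℝ (fun x => (u x).1) x
        + ((u x).2 • fderiv ℝ (fun x => (f x).2) x + (f x).2 • fderiv ℝ (fun x => (u x).2) x)
        = ((u x).1 • fderiv ℝ (fun x => (f x).1) x + (u x).2 • fderiv ℝ (fun x => (f x).2) x)
          + ((f x).1 • fderiv ℝ (fun x => (u x).1) x + (f x).2 • fderiv ℝ (fun x => (u x).2) x) := by
      abel
    rw [harr, hkey2 x, add_zero] at h
    exact h
  have hdiff : Differentiable ℝ (fun x => dot (u x) (f x)) := fun x => (hasfd x).differentiableAt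
  have hfd : fderiv ℝ (fun x => dot (u x) (f x)) = fun x =>
      (u x).1 • fderiv ℝ (fun x => (f x).1) x + (u x).2 • fderiv ℝ (fun x => (f x).2) x :=
    funext fun x => (hasfd x).fderiv
  have hf1' : ContDiff ℝ (1+1) (fun x => (f x).1) := by norm_num; exact hf1
  have hf2' : ContDiff ℝ (1+1) (fun x => (f x).2) := by norm_num; exact hf2
  have hDf1 : ContDiff ℝ 1 (fderiv ℝ (fun x => (f x).1)) := (contDiff_succ_iff_fderiv.mp hf1').2.2
  have hDf2 : ContDiff ℝ 1 (fderiv ℝ (fun x => (f x).2)) := (contDiff_succ_iff_fderiv.mp hf2').2.2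
  have hC : ContDiff ℝ 1 (fderiv ℝ (fun x => dot (u x) (f x))) := by
    rw [hfd]; exact (hu1.smul hDf1).add (hu2.smul hDf2)
  rw [show (2 : WithTop ℕ∞) = 1 + 1 by norm_num]
  exact contDiff_succ_iff_fderiv.mpr ⟨hdiff, by simp, hC⟩

lemma perp_zero (u : ℝ × ℝ → ℝ × ℝ)
    (hunit : ∀ x, dot (u x) (u x) = 1)
    (hline : ∀ (x : ℝ × ℝ) (t : ℝ), 0 ≤ t → u (x + t • u x) = u x)
    (f : ℝ × ℝ → ℝ × ℝ) (hfc : Continuous f)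
    (hcs : HasCompactSupport f) (hT : ∀ x, T0 u f x = 0) :
    ∀ x, dot (perp (u x)) (f x) = 0 := by
  intro x
  obtain ⟨R, hR0, hR⟩ := hcs.exists_pos_le_norm
  set g : ℝ → ℝ := fun s => dot (perp (u x)) (f (x + s • u x)) with hg
  have hgc : Continuous g := by
    apply Continuous.add
    · exact (continuous_const.mul ((hfc.comp (by continuity)).fst))
    · exact (continuous_const.mul ((hfc.comp (by continuity)).snd))
  -- the unit vector has norm ≥ 1/2 in sup norm
  have hun : (1:ℝ)/2 ≤ ‖u x‖ := by
    have h := hunit x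
    simp only [dot] at h
    rw [Prod.norm_def]
    rcases le_total |(u x).1| |(u x).2| with hc | hc
    · have : (1:ℝ)/2 ≤ |(u x).2| := by nlinarith [abs_nonneg (u x).1, abs_nonneg (u x).2, sq_abs (u x).1, sq_abs (u x).2]
      simp only [Real.norm_eq_abs]; exact this.trans (le_max_right _ _)
    · have : (1:ℝ)/2 ≤ |(u x).1| := by nlinarith [abs_nonneg (u x).1, abs_nonneg (u x).2, sq_abs (u x).1, sq_abs (u x).2]
      simp only [Real.norm_eq_abs]; exact this.trans (le_max_left _ _)
  set M : ℝ := 2*(R + ‖x‖) with hM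
  have hM0 : 0 < M := by positivity
  have hgz : ∀ s : ℝ, M ≤ |s| → g s = 0 := by
    intro s hs
    have h1 : ‖s • u x‖ ≤ ‖x + s • u x‖ + ‖x‖ := by
      calc ‖s • u x‖ = ‖(x + s • u x) + (-x)‖ := by congr 1; abel
      _ ≤ ‖x + s • u x‖ + ‖(-x)‖ := norm_add_le _ _
      _ = ‖x + s • u x‖ + ‖x‖ := by rw [norm_neg]
    have h2 : |s| * (1/2) ≤ ‖s • u x‖ := by
      rw [norm_smul, Real.norm_eq_abs]
      exact mul_le_mul_of_nonneg_left hun (abs_nonneg s)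
    have h3 : R ≤ ‖x + s • u x‖ := by nlinarith
    have := hR _ h3
    simp [hg, this, dot]
  have key : ∀ s : ℝ, 0 ≤ s → ∫ t in Set.Ioi (0:ℝ), g (s + t) = 0 := by
    intro s hs
    have h := hT (x + s • u x)
    simp only [T0, neg_eq_zero] at h
    refine Eq.trans ?_ h
    apply setIntegral_congr_fun measurableSet_Ioi
    intro t _
    show g (s + t) = dot (perp (u (x + s • u x))) (f (x + s • u x + t • u (x + s • u x)))
    rw [hline x s hs]
    show dot (perp (u x)) (f (x + (s + t) • u x)) = _
    congr 2
    module
  -- convert to interval integrals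
  have hint : ∀ a b : ℝ, IntervalIntegrable g volume a b := fun a b => hgc.intervalIntegrable a b
  have key2 : ∀ s : ℝ, 0 ≤ s → ∫ t in s..(M+1+s), g t = 0 := by
    intro s hs
    have h1 : ∫ t in Set.Ioi (0:ℝ), g (s + t) = ∫ t in Set.Ioc (0:ℝ) (M+1), g (s + t) := by
      rw [← Set.Ioc_union_Ioi_eq_Ioi (by linarith : (0:ℝ) ≤ M+1),
        setIntegral_union (Set.Ioc_disjoint_Ioi le_rfl) measurableSet_Ioi]
      · have hz : ∀ t ∈ Set.Ioi (M+1), g (s + t) = 0 := by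
          intro t ht
          apply hgz
          rw [abs_of_nonneg (by simp at ht; linarith)]
          simp at ht; linarith
        rw [setIntegral_congr_fun measurableSet_Ioi hz]
        simp
      · exact (hgc.comp (continuous_const.add continuous_id)).integrableOn_Ioc
      · apply (integrableOn_congr_fun (fun t ht => by
          apply hgz; rw [abs_of_nonneg (by simp at ht; linarith)]; simp at ht; linarith)
          measurableSet_Ioi).mpr
        exact integrableOn_zero
    have h2 : ∫ t in Set.Ioc (0:ℝ) (M+1), g (s + t) = ∫ t in (0:ℝ)..(M+1), g (t + s) := by
      rw [intervalIntegral.integral_of_le (by linarith)]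
      apply setIntegral_congr_fun measurableSet_Ioc
      intro t _; show g (s + t) = g (t + s); rw [add_comm s t]
    have h3 : ∫ t in (0:ℝ)..(M+1), g (t + s) = ∫ t in s..(M+1+s), g t := by
      rw [intervalIntegral.integral_comp_add_right g s]
      norm_num
    have := key s hs
    rw [h1, h2, h3] at this
    exact this
  have key3 : ∀ s : ℝ, 0 ≤ s → ∫ t in (0:ℝ)..s, g t = 0 := by
    intro s hs
    have hadd : (∫ t in (0:ℝ)..s, g t) + ∫ t in s..(M+1+s), g t = ∫ t in (0:ℝ)..(M+1+s), g t :=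
      intervalIntegral.integral_add_adjacent_intervals (hint _ _) (hint _ _)
    have hadd2 : (∫ t in (0:ℝ)..(M+1), g t) + ∫ t in (M+1)..(M+1+s), g t = ∫ t in (0:ℝ)..(M+1+s), g t :=
      intervalIntegral.integral_add_adjacent_intervals (hint _ _) (hint _ _)
    have hz1 : ∫ t in (M+1)..(M+1+s), g t = 0 := by
      have : Set.EqOn g 0 (Set.uIcc (M+1) (M+1+s)) := by
        intro t ht
        rw [Set.uIcc_of_le (by linarith)] at ht
        apply hgz
        rw [abs_of_nonneg (by cases ht with | intro h1 h2 => linarith)]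
        cases ht with | intro h1 h2 => linarith
      rw [intervalIntegral.integral_congr this]
      simp
    have h01 : ∫ t in (0:ℝ)..(M+1), g t = 0 := by
      have := key2 0 le_rfl
      simpa using this
    have h0s : ∫ t in (0:ℝ)..(M+1+s), g t = 0 := by rw [← hadd2, h01, hz1]; ring
    have := key2 s hs
    rw [h0s, this] at hadd
    linarith [hadd]
  -- FTC
  have hG1 : HasDerivWithinAt (fun s => ∫ t in (0:ℝ)..s, g t) (g 0) (Set.Ici 0) 0 :=
    (hgc.integral_hasStrictDerivAt 0 0).hasDerivAt.hasDerivWithinAt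
  have hG2 : HasDerivWithinAt (fun s => ∫ t in (0:ℝ)..s, g t) 0 (Set.Ici 0) 0 := by
    apply HasDerivWithinAt.congr (hasDerivWithinAt_const 0 (Set.Ici 0) 0)
    · intro y hy; exact key3 y hy
    · exact key3 0 le_rfl
  have hud : UniqueDiffWithinAt ℝ (Set.Ici (0:ℝ)) 0 := uniqueDiffOn_Ici 0 0 (Set.mem_Ici.mpr le_rfl)
  have : g 0 = 0 := by
    rw [← hG1.derivWithin hud, hG2.derivWithin hud]
  simpa [hg] using this


theorem stmt2
    (u : ℝ × ℝ → ℝ × ℝ) (hu : ContDiff ℝ 1 u)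
    (hunit : ∀ x, dot (u x) (u x) = 1)
    (hline : ∀ (x : ℝ × ℝ) (t : ℝ), 0 ≤ t → u (x + t • u x) = u x)
    (f : ℝ × ℝ → ℝ × ℝ) (hf : ContDiff ℝ 2 f)
    (hcs : HasCompactSupport f) (hsupp : tsupport f ⊆ disc) :
    (∀ x, T0 u f x = 0) ↔
      ∃ φ : ℝ × ℝ → ℝ, ContDiff ℝ 2 φ ∧ HasCompactSupport φ ∧ tsupport φ ⊆ disc ∧
        ∀ x, f x = φ x • u x := by
  constructor
  · intro hT
    have hperp := perp_zero u hunit hline f hf.continuous hcs hT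
    have hpar : ∀ x, f x = dot (u x) (f x) • u x := by
      intro x
      have h1 := hperp x
      have h2 := hunit x
      simp only [dot, perp] at h1 h2
      refine Prod.ext ?_ ?_
      · simp only [Prod.smul_fst, smul_eq_mul, dot]
        linear_combination (-(f x).1) * h2 - (u x).2 * h1
      · simp only [Prod.smul_snd, smul_eq_mul, dot]
        linear_combination (-(f x).2) * h2 + (u x).1 * h1
    have hsub : Function.support (fun x => dot (u x) (f x)) ⊆ Function.support f := by
      intro x hx
      simp only [Function.mem_support] at hx ⊢
      intro h0
      exact hx (by rw [h0]; simp [dot])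
    exact ⟨fun x => dot (u x) (f x), phi_contDiff u hu hunit f hf hpar, hcs.mono hsub,
      le_trans (closure_mono hsub) hsupp, hpar⟩
  · rintro ⟨φ, _, _, _, hφu⟩
    intro x
    simp only [T0, neg_eq_zero]
    have hzero : Set.EqOn (fun t : ℝ => dot (perp (u x)) (f (x + t • u x)))
        (fun _ => (0:ℝ)) (Set.Ioi 0) := by
      intro t ht
      show dot (perp (u x)) (f (x + t • u x)) = 0
      rw [hφu (x + t • u x), hline x t (le_of_lt (Set.mem_Ioi.mp ht))]
      simp only [dot, perp, Prod.smul_fst, Prod.smul_snd, smul_eq_mul]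
      ring
    rw [setIntegral_congr_fun measurableSet_Ioi hzero]
    simp
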